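/- Let ε > 0 and let w be a point of the upper half-plane ℍ with u(i, w) ≤ sinh²(ε/2). Then (1 + |w − i|) / Im(w) ≤ 2 e^ε − 1. -/

import Mathlib

open MeasureTheory

/-- `u(z,w) = |z − w|² / (4 Im z Im w)`. -/
noncomputable def hypu (z w : ℂ) : ℝ :=
  ‖z - w‖ ^ 2 / (4 * z.im * w.im)

lemma stmt10_aux (ε d v : ℝ) (hε : 0 < ε) (hv : 0 < v) (hd0 : 0 ≤ d)
    (hd2 : d ^ 2 ≤ 4 * v * Real.sinh (ε / 2) ^ 2)
    (hvd : (v - 1) ^ 2 ≤ d ^ 2) :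
    (1 + d) / v ≤ 2 * Real.exp ε - 1 := by
  have hcosh : Real.exp ε + Real.exp (-ε) = 2 + 4 * Real.sinh (ε / 2) ^ 2 := by
    have ha := Real.cosh_two_mul (ε / 2)
    rw [show 2 * (ε / 2) = ε by ring] at ha
    have hb := Real.cosh_sq (ε / 2)
    have h3 : Real.cosh ε = (Real.exp ε + Real.exp (-ε)) / 2 := Real.cosh_eq ε
    nlinarith
  have hkey : v ^ 2 - (Real.exp ε + Real.exp (-ε)) * v + 1 ≤ 0 := by nlinarith
  have hEE : Real.exp (-ε) * Real.exp ε = 1 := by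
    rw [← Real.exp_add]; simp
  have hlt : Real.exp (-ε) < Real.exp ε := Real.exp_lt_exp.mpr (by linarith)
  have hvlow : Real.exp (-ε) ≤ v := by
    by_contra hc
    push_neg at hc
    have h1 : 0 < Real.exp (-ε) - v := by linarith
    have h2 : 0 < Real.exp ε - v := by linarith
    nlinarith [mul_pos h1 h2]
  have hEv : 1 ≤ Real.exp ε * v := by
    nlinarith [Real.exp_pos ε]
  have hsinh : Real.sinh (ε / 2) = (Real.exp (ε / 2) - Real.exp (-(ε / 2))) / 2 :=
    Real.sinh_eq _
  have he2 : Real.exp (ε / 2) * Real.exp (ε / 2) = Real.exp ε := by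
    rw [← Real.exp_add]; ring_nf
  have he3 : Real.exp (ε / 2) * Real.exp (-(ε / 2)) = 1 := by
    rw [← Real.exp_add]; simp
  have hfac : 4 * Real.sinh (ε / 2) ^ 2 * Real.exp ε = (Real.exp ε - 1) ^ 2 := by
    rw [hsinh]
    nlinarith [he2, he3]
  have hE1 : (1 : ℝ) ≤ Real.exp ε := Real.one_le_exp (le_of_lt hε)
  have hRv0 : (0 : ℝ) ≤ (Real.exp ε - 1) * v := mul_nonneg (by linarith) hv.le
  have hnn : (0 : ℝ) ≤ 4 * v * Real.sinh (ε / 2) ^ 2 := by positivity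
  have hsq : d ^ 2 ≤ ((Real.exp ε - 1) * v) ^ 2 := by
    calc d ^ 2 ≤ 4 * v * Real.sinh (ε / 2) ^ 2 := hd2
      _ ≤ (4 * v * Real.sinh (ε / 2) ^ 2) * (Real.exp ε * v) :=
          le_mul_of_one_le_right hnn hEv
      _ = ((Real.exp ε - 1) * v) ^ 2 := by rw [mul_pow, ← hfac]; ring
  have hdv : d ≤ (Real.exp ε - 1) * v := by
    have hs := Real.sqrt_le_sqrt hsq
    rwa [Real.sqrt_sq hd0, Real.sqrt_sq hRv0] at hs
  rw [div_le_iff₀ hv]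
  linarith

/-- For `ε > 0` and `w ∈ ℍ` with `u(i,w) ≤ sinh²(ε/2)`, one has
`(1 + |w − i|) / Im w ≤ 2 e^ε − 1`. -/
theorem stmt10 (ε : ℝ) (hε : 0 < ε) (w : ℂ) (hw : 0 < w.im)
    (h : hypu Complex.I w ≤ Real.sinh (ε / 2) ^ 2) :
    (1 + ‖w - Complex.I‖) / w.im ≤ 2 * Real.exp ε - 1 := by
  have hd0 : 0 ≤ ‖w - Complex.I‖ := norm_nonneg _
  have hd2 : ‖w - Complex.I‖ ^ 2 ≤ 4 * w.im * Real.sinh (ε / 2) ^ 2 := by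
    have hu : hypu Complex.I w = ‖w - Complex.I‖ ^ 2 / (4 * w.im) := by
      simp [hypu, norm_sub_rev Complex.I w, Complex.I_im]
    rw [hu, div_le_iff₀ (by positivity)] at h
    linarith [h]
  have hvd : (w.im - 1) ^ 2 ≤ ‖w - Complex.I‖ ^ 2 := by
    have h1 : (w - Complex.I).im = w.im - 1 := by simp [Complex.sub_im, Complex.I_im]
    have h2 := Complex.abs_im_le_norm (w - Complex.I)
    rw [h1] at h2
    have h4 := mul_le_mul h2 h2 (abs_nonneg _) hd0
    nlinarith [sq_abs (w.im - 1)]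
  exact stmt10_aux ε (‖w - Complex.I‖) w.im hε hw hd0 hd2 hvd
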